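/- In an LMSR tree, for any node z the price of its interval event decomposes as p_{I_z}(θ) = (S_z / S_root)·Π_{z' ⊋ z} e^{s_{z'}/b}, where the product is over strict ancestors z' of z. -/

import Mathlib

inductive LTree where
  | leaf (lo hi s : ℝ)
  | node (lo hi s : ℝ) (l r : LTree)

namespace LTree

def lo : LTree → ℝ
  | .leaf a _ _ => a
  | .node a _ _ _ _ => a

def hi : LTree → ℝ
  | .leaf _ h _ => h
  | .node _ h _ _ _ => h

/-- The binary-search property of an LMSR tree. -/
def BSP : LTree → Prop
  | .leaf a h _ => a < h
  | .node a h _ l r =>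
      l.lo = a ∧ l.hi = r.lo ∧ r.hi = h ∧ a < l.hi ∧ l.hi < h ∧ l.BSP ∧ r.BSP

/-- `∏_{z' ∋ x} e^{s_{z'}/b}` over all nodes of the tree containing `x`. -/
noncomputable def prodF (b : ℝ) : LTree → ℝ → ℝ
  | .leaf a h s, x => if a ≤ x ∧ x < h then Real.exp (s / b) else 1
  | .node a h s l r, x =>
      (if a ≤ x ∧ x < h then Real.exp (s / b) else 1) * l.prodF b x * r.prodF b x

/-- The market state at outcome `x`: `θ_x(T) = ∑_{z ∋ x} s_z`. -/
noncomputable def thetaF : LTree → ℝ → ℝ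
  | .leaf a h s, x => if a ≤ x ∧ x < h then s else 0
  | .node a h s l r, x => (if a ≤ x ∧ x < h then s else 0) + l.thetaF x + r.thetaF x

/-- The partial normalization constant of the subtree rooted at `z`. -/
noncomputable def Sval (N : ℕ) (b : ℝ) (T : LTree) : ℝ :=
  (1 / (N : ℝ)) * ∑ j ∈ Finset.range N,
    if T.lo ≤ (j : ℝ) / N ∧ (j : ℝ) / N < T.hi then T.prodF b ((j : ℝ) / N) else 0

/-- `Anc b T z P` holds when `z` is a (weak) descendant of the root `T` and
`P = ∏_{z' ⊋ z} e^{s_{z'}/b}` is the product over the strict ancestors of `z` in `T`. -/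
inductive Anc (b : ℝ) : LTree → LTree → ℝ → Prop
  | refl (T : LTree) : Anc b T T 1
  | left {T : LTree} {a h s : ℝ} {l r : LTree} {P : ℝ} :
      Anc b T (LTree.node a h s l r) P → Anc b T l (P * Real.exp (s / b))
  | right {T : LTree} {a h s : ℝ} {l r : LTree} {P : ℝ} :
      Anc b T (LTree.node a h s l r) P → Anc b T r (P * Real.exp (s / b))

end LTree


namespace LTree

lemma prodF_pos (b : ℝ) (T : LTree) (x : ℝ) : 0 < T.prodF b x := by
  induction T with
  | leaf a h s => unfold prodF; split <;> positivity
  | node a h s l r ihl ihr =>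
      unfold prodF
      have hpos : (0:ℝ) < if a ≤ x ∧ x < h then Real.exp (s / b) else 1 := by
        split <;> positivity
      positivity

lemma exp_thetaF (b : ℝ) (T : LTree) (x : ℝ) :
    Real.exp (T.thetaF x / b) = T.prodF b x := by
  induction T with
  | leaf a h s =>
      unfold thetaF prodF
      split <;> simp
  | node a h s l r ihl ihr =>
      unfold thetaF prodF
      rw [add_div, add_div, Real.exp_add, Real.exp_add, ihl, ihr]
      split <;> simp

lemma prodF_eq_one {b : ℝ} {T : LTree} (hT : T.BSP) {x : ℝ}
    (hx : ¬(T.lo ≤ x ∧ x < T.hi)) : T.prodF b x = 1 := by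
  induction T with
  | leaf a h s =>
      simp only [lo, hi] at hx
      unfold prodF; rw [if_neg hx]
  | node a h s l r ihl ihr =>
      obtain ⟨hl, hm, hr, h1, h2, hL, hR⟩ := hT
      simp only [lo, hi] at hx
      have hxl : ¬(l.lo ≤ x ∧ x < l.hi) := by
        rw [hl]; rintro ⟨hx1, hx2⟩; exact hx ⟨hx1, lt_trans hx2 h2⟩
      have hxr : ¬(r.lo ≤ x ∧ x < r.hi) := by
        rw [← hm, hr]; rintro ⟨hx1, hx2⟩
        exact hx ⟨le_trans (le_of_lt h1) hx1, hx2⟩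
      unfold prodF
      rw [if_neg hx, ihl hL hxl, ihr hR hxr, mul_one, mul_one]

lemma anc_bsp {b : ℝ} {T z : LTree} {P : ℝ} (h : LTree.Anc b T z P)
    (hT : T.BSP) : z.BSP := by
  induction h with
  | refl => exact hT
  | left _ ih => exact ih.2.2.2.2.2.1
  | right _ ih => exact ih.2.2.2.2.2.2

lemma anc_prodF {b : ℝ} {T z : LTree} {P : ℝ} (hh : LTree.Anc b T z P)
    (hT : T.BSP) : ∀ x : ℝ, (z.lo ≤ x ∧ x < z.hi) → T.prodF b x = P * z.prodF b x := by
  induction hh with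
  | refl => intro x hx; rw [one_mul]
  | @left a h s l r P hAnc ih =>
      intro x hx
      obtain ⟨hl, hm, hr, h1, h2, hL, hR⟩ := anc_bsp hAnc hT
      have hxn : a ≤ x ∧ x < h := by
        constructor
        · rw [← hl]; exact hx.1
        · exact lt_trans hx.2 h2
      have hxr : ¬(r.lo ≤ x ∧ x < r.hi) := by
        rw [← hm]; rintro ⟨hx1, _⟩; exact absurd hx.2 (not_lt_of_ge hx1)
      have hnode : (LTree.node a h s l r).lo ≤ x ∧ x < (LTree.node a h s l r).hi := hxn
      rw [ih x hnode]
      show P * ((if a ≤ x ∧ x < h then Real.exp (s / b) else 1)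
          * l.prodF b x * r.prodF b x) = P * Real.exp (s / b) * l.prodF b x
      rw [if_pos hxn, prodF_eq_one hR hxr, mul_one, mul_assoc]
  | @right a h s l r P hAnc ih =>
      intro x hx
      obtain ⟨hl, hm, hr, h1, h2, hL, hR⟩ := anc_bsp hAnc hT
      have hxn : a ≤ x ∧ x < h := by
        constructor
        · exact le_trans (le_of_lt h1) (hm ▸ hx.1)
        · rw [← hr]; exact hx.2
      have hxl : ¬(l.lo ≤ x ∧ x < l.hi) := by
        rintro ⟨_, hx2⟩; exact absurd (hm ▸ hx.1) (not_le_of_gt hx2)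
      have hnode : (LTree.node a h s l r).lo ≤ x ∧ x < (LTree.node a h s l r).hi := hxn
      rw [ih x hnode]
      show P * ((if a ≤ x ∧ x < h then Real.exp (s / b) else 1)
          * l.prodF b x * r.prodF b x) = P * Real.exp (s / b) * r.prodF b x
      rw [if_pos hxn, prodF_eq_one hL hxl, mul_one]
      ring

end LTree

/-- Price decomposition in an LMSR tree: for any node `z` of the tree `T` with strict
ancestor product `P = ∏_{z' ⊋ z} e^{s_{z'}/b}`, the LMSR price of the interval event `I_z`
induced by the state `θ(T)` satisfies `p_{I_z}(θ) = (S_z / S_root)·P`. -/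
theorem lmsr_tree_price_decomposition
    (N : ℕ) (hN : 0 < N) (b : ℝ) (hb : 0 < b) (T z : LTree) (P : ℝ)
    (hBSP : T.BSP) (hlo : T.lo = 0) (hhi : T.hi = 1)
    (hanc : LTree.Anc b T z P) :
    (∑ j ∈ Finset.range N,
        if z.lo ≤ (j : ℝ) / N ∧ (j : ℝ) / N < z.hi
        then Real.exp (T.thetaF ((j : ℝ) / N) / b) else 0) /
      (∑ j ∈ Finset.range N, Real.exp (T.thetaF ((j : ℝ) / N) / b)) =
    (z.Sval N b / T.Sval N b) * P := by
  have hNne : (N : ℝ) ≠ 0 := Nat.cast_ne_zero.mpr hN.ne'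
  -- each point j/N lies in [0,1) = I_T
  have hmem : ∀ j ∈ Finset.range N, T.lo ≤ (j : ℝ) / N ∧ (j : ℝ) / N < T.hi := by
    intro j hj
    rw [hlo, hhi]
    constructor
    · positivity
    · rw [div_lt_one (by exact_mod_cast hN)]
      exact_mod_cast Finset.mem_range.mp hj
  -- denominator = N * Sval T
  have hden : (∑ j ∈ Finset.range N, Real.exp (T.thetaF ((j : ℝ) / N) / b))
      = (N : ℝ) * T.Sval N b := by
    unfold LTree.Sval
    rw [← mul_assoc, mul_one_div, div_self hNne, one_mul]
    refine Finset.sum_congr rfl fun j hj => ?_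
    rw [if_pos (hmem j hj), LTree.exp_thetaF]
  -- numerator = P * (N * Sval z)
  have hnum : (∑ j ∈ Finset.range N,
      if z.lo ≤ (j : ℝ) / N ∧ (j : ℝ) / N < z.hi
      then Real.exp (T.thetaF ((j : ℝ) / N) / b) else 0)
      = P * ((N : ℝ) * z.Sval N b) := by
    unfold LTree.Sval
    rw [← mul_assoc ((N:ℝ)), mul_one_div, div_self hNne, one_mul, Finset.mul_sum]
    refine Finset.sum_congr rfl fun j hj => ?_
    split
    · next hmemz =>
        rw [LTree.exp_thetaF, LTree.anc_prodF hanc hBSP _ hmemz]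
    · next => rw [mul_zero]
  -- Sval T > 0
  have hSpos : 0 < T.Sval N b := by
    have : 0 < (∑ j ∈ Finset.range N, Real.exp (T.thetaF ((j : ℝ) / N) / b)) := by
      apply Finset.sum_pos (fun j _ => Real.exp_pos _)
      exact ⟨0, Finset.mem_range.mpr hN⟩
    rw [hden] at this
    have hN' : (0:ℝ) < N := by exact_mod_cast hN
    nlinarith
  rw [hnum, hden]
  field_simp
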